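/- Let X be an n-dimensional Fano manifold with anticanonical polarization, Z a smooth submanifold of codimension r, and σ: X̂ → X the blowup along Z with exceptional divisor E. Then for 0 < x < ε(Z), the quantity −μ(X)·ã₀(x) + ã₁(x) + ã₀′(x)/2 equals (r − x)·(σ*(−K_X) − xE)^{n−1}·E / (2(n−1)!); hence if ε(Z) ≤ r then (X, −K_X) is slope stable with respect to Z. -/

import Mathlib

open intervalIntegral in
/-- Lemma 2.10: `X` an `n`-dimensional Fano manifold with the
anticanonical polarization `A = −K_X`, `Z ⊂ X` smooth of codimension `r`,
`σ : X̂ → X` the blowup with exceptional divisor `E`. Encode the intersection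
data as real functions: `S x = (σ*A − xE)^n`, `U x = (σ*A − xE)^{n−1}·σ*A`,
`T x = (σ*A − xE)^{n−1}·E`, so `S x = U x − x·T x` (`hSUT`). Then
`a₀(x) = S x / n!` (`ha0`) and, since `K_{X̂} = −σ*A + (r−1)E`,
`a₁(x) = −K_{X̂}·(σ*A − xE)^{n−1}/(2(n−1)!) = (U x − (r−1)T x)/(2(n−1)!)`
(`ha1`); moreover `a₀′(x) = −T x/(n−1)!` (`hderiv`), so `ã₀′(x) = T x/(n−1)!`.
The coefficients of `(X, −K_X)` are `a₀ = a₀(0)`, `a₁ = a₁(0)` with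
`a₁ = μ(X)·a₀ = (n/2)·a₀` (`hμ`). Since `σ*A − xE` is ample on `(0, ε(Z))`,
`T x > 0` there (`hpos`). CONCLUSION: for `0 < x < ε(Z)`,
`−μ(X)·ã₀(x) + ã₁(x) + ã₀′(x)/2 = (r − x)·T x/(2(n−1)!)`; hence if
`ε(Z) ≤ r` then for every `λ ∈ (0, ε(Z)]` the quotient slope
`μ_λ(O_Z) = (∫₀^λ (ã₁ + ã₀′/2)) / (∫₀^λ ã₀)` exceeds `μ(X) = n/2`, i.e.
`(X, −K_X)` is slope stable with respect to `Z`. -/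
theorem stmt_12 (n r : ℕ) (hn : 2 ≤ n) (hr1 : 1 ≤ r) (hrn : r ≤ n)
    (ε : ℝ) (hε : 0 < ε)
    (S U T : ℝ → ℝ) (hContU : Continuous U) (hContT : Continuous T)
    (hSUT : ∀ x : ℝ, S x = U x - x * T x)
    (a0 a1 : ℝ → ℝ)
    (ha0 : ∀ x : ℝ, a0 x = S x / (n.factorial : ℝ))
    (ha1 : ∀ x : ℝ, a1 x = (U x - ((r : ℝ) - 1) * T x) / (2 * ((n - 1).factorial : ℝ)))
    (hderiv : ∀ x : ℝ, HasDerivAt a0 (-(T x) / ((n - 1).factorial : ℝ)) x)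
    (a0c a1c : ℝ) (ha0c : a0c = a0 0) (ha1c : a1c = a1 0)
    (hμ : a1c = ((n : ℝ) / 2) * a0c)
    (hpos : ∀ x : ℝ, 0 < x → x < ε → 0 < T x) :
    (∀ x : ℝ, 0 < x → x < ε →
        -((n : ℝ) / 2) * (a0c - a0 x) + (a1c - a1 x) + (T x / ((n - 1).factorial : ℝ)) / 2
          = ((r : ℝ) - x) * T x / (2 * ((n - 1).factorial : ℝ)))
      ∧ (ε ≤ (r : ℝ) → ∀ lam : ℝ, 0 < lam → lam ≤ ε →
          ((n : ℝ) / 2) <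
            (∫ x in (0 : ℝ)..lam, (a1c - a1 x) + (T x / ((n - 1).factorial : ℝ)) / 2)
              / (∫ x in (0 : ℝ)..lam, a0c - a0 x)) := by

  have hF : (0:ℝ) < ((n - 1).factorial : ℝ) := by positivity
  have hnfac : (n.factorial : ℝ) = (n : ℝ) * ((n - 1).factorial : ℝ) := by
    have h1 : n = (n - 1) + 1 := (Nat.succ_pred_eq_of_pos (by omega)).symm
    rw [h1, Nat.factorial_succ]
    push_cast
    ring
  have hnpos : (0:ℝ) < (n : ℝ) := by positivity
  -- Part 1
  have hmain : ∀ x : ℝ, 0 < x → x < ε →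
      -((n : ℝ) / 2) * (a0c - a0 x) + (a1c - a1 x) + (T x / ((n - 1).factorial : ℝ)) / 2
        = ((r : ℝ) - x) * T x / (2 * ((n - 1).factorial : ℝ)) := by
    intro x hx hxe
    rw [ha0 x, ha1 x, hSUT x, hμ, hnfac]
    field_simp
    ring
  refine ⟨hmain, ?_⟩
  intro hεr lam hlam hlamε
  -- continuity
  have hContA0 : Continuous a0 := by
    have : Differentiable ℝ a0 := fun x => (hderiv x).differentiableAt
    exact this.continuous
  have hContA1 : Continuous a1 := by
    refine Continuous.congr ?_ (fun x => (ha1 x).symm)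
    exact ((hContU.sub (continuous_const.mul hContT)).div_const _)
  have hContD : Continuous (fun x => a0c - a0 x) := continuous_const.sub hContA0
  have hContN : Continuous (fun x => (a1c - a1 x) + (T x / ((n - 1).factorial : ℝ)) / 2) := by
    exact (continuous_const.sub hContA1).add ((hContT.div_const _).div_const _)
  have hContG : Continuous (fun x =>
      (a1c - a1 x) + (T x / ((n - 1).factorial : ℝ)) / 2 - ((n : ℝ) / 2) * (a0c - a0 x)) :=
    hContN.sub (continuous_const.mul hContD)
  -- a0 strictly decreasing on [0, ε]
  have hanti : StrictAntiOn a0 (Set.Icc 0 ε) := by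
    apply strictAntiOn_of_deriv_neg (convex_Icc 0 ε) hContA0.continuousOn
    intro x hx
    rw [interior_Icc] at hx
    rw [(hderiv x).deriv]
    have := hpos x hx.1 hx.2
    have : (0:ℝ) < T x / ((n - 1).factorial : ℝ) := div_pos this hF
    rw [neg_div]
    linarith
  have hDpos : ∀ x ∈ Set.Ioo (0:ℝ) lam, 0 < a0c - a0 x := by
    intro x hx
    have hxε : x ∈ Set.Icc (0:ℝ) ε := ⟨le_of_lt hx.1, le_of_lt (lt_of_lt_of_le hx.2 hlamε)⟩
    have := hanti (Set.left_mem_Icc.2 hε.le) hxε hx.1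
    rw [← ha0c] at this
    linarith
  have hGpos : ∀ x ∈ Set.Ioo (0:ℝ) lam, 0 <
      (a1c - a1 x) + (T x / ((n - 1).factorial : ℝ)) / 2 - ((n : ℝ) / 2) * (a0c - a0 x) := by
    intro x hx
    have hxε : x < ε := lt_of_lt_of_le hx.2 hlamε
    have h := hmain x hx.1 hxε
    have hT := hpos x hx.1 hxε
    have hrx : 0 < (r : ℝ) - x := by
      have : x < (r : ℝ) := lt_of_lt_of_le hxε hεr
      linarith
    have hval : (0:ℝ) < ((r : ℝ) - x) * T x / (2 * ((n - 1).factorial : ℝ)) := by positivity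
    linarith [h]
  have hIntD : IntervalIntegrable (fun x => a0c - a0 x) MeasureTheory.volume 0 lam :=
    hContD.intervalIntegrable 0 lam
  have hIntG : IntervalIntegrable (fun x =>
      (a1c - a1 x) + (T x / ((n - 1).factorial : ℝ)) / 2 - ((n : ℝ) / 2) * (a0c - a0 x))
      MeasureTheory.volume 0 lam := hContG.intervalIntegrable 0 lam
  have hDintpos : 0 < ∫ x in (0:ℝ)..lam, a0c - a0 x :=
    intervalIntegral.intervalIntegral_pos_of_pos_on hIntD hDpos hlam
  have hGintpos : 0 < ∫ x in (0:ℝ)..lam,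
      ((a1c - a1 x) + (T x / ((n - 1).factorial : ℝ)) / 2 - ((n : ℝ) / 2) * (a0c - a0 x)) :=
    intervalIntegral.intervalIntegral_pos_of_pos_on hIntG hGpos hlam
  have hsplit : (∫ x in (0:ℝ)..lam,
      ((a1c - a1 x) + (T x / ((n - 1).factorial : ℝ)) / 2 - ((n : ℝ) / 2) * (a0c - a0 x)))
      = (∫ x in (0:ℝ)..lam, (a1c - a1 x) + (T x / ((n - 1).factorial : ℝ)) / 2)
        - ((n : ℝ) / 2) * ∫ x in (0:ℝ)..lam, a0c - a0 x := by
    rw [intervalIntegral.integral_sub (hContN.intervalIntegrable 0 lam)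
      (Continuous.intervalIntegrable (u := fun x => ((n : ℝ) / 2) * (a0c - a0 x))
        (continuous_const.mul hContD) 0 lam),
      intervalIntegral.integral_const_mul]
  rw [lt_div_iff₀ hDintpos]
  linarith [hGintpos, hsplit]
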